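/- arXiv:1512.04978 — 7 statements merged into one kernel-verified Lean document; each statement's English description precedes it below -/
import Mathlib

section
/- Let G be a group and N a normal subgroup of G, and let g ∈ N lie in the G-conjugacy class C. Suppose C is the disjoint union of N-conjugacy classes C₁, ..., Cₛ, and for each i let xᵢ ∈ G be such that xᵢ g xᵢ⁻¹ ∈ Cᵢ. Then g is real in N (i.e., conjugate to g⁻¹ by an element of N) if and only if xᵢ g xᵢ⁻¹ is real in N for every i. -/
/-- Lemma 3.1 (Gill–Singh style): if the `G`-class of `g ∈ N` splits into the
`N`-classes `C i`, with `x i * g * (x i)⁻¹ ∈ C i`, then `g` is real in `N` iff each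
`x i * g * (x i)⁻¹` is real in `N`. -/
theorem stmt_0 {G : Type*} [Group G] (N : Subgroup G) [N.Normal] (g : G) (hg : g ∈ N)
    (s : ℕ) (C : Fin s → Set G)
    (hclass : ∀ i, ∃ y, y ∈ C i ∧ C i = {z | ∃ n ∈ N, z = n * y * n⁻¹})
    (hunion : {z : G | ∃ x : G, z = x * g * x⁻¹} = ⋃ i, C i)
    (hdisj : ∀ i j, i ≠ j → Disjoint (C i) (C j))
    (x : Fin s → G) (hx : ∀ i, x i * g * (x i)⁻¹ ∈ C i) :
    (∃ h ∈ N, h * g * h⁻¹ = g⁻¹) ↔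
      ∀ i, ∃ h ∈ N, h * (x i * g * (x i)⁻¹) * h⁻¹ = (x i * g * (x i)⁻¹)⁻¹ := by
  constructor
  · rintro ⟨h, hN, hh⟩ i
    refine ⟨x i * h * (x i)⁻¹, Subgroup.Normal.conj_mem ‹N.Normal› h hN (x i), ?_⟩
    rw [show x i * h * (x i)⁻¹ * (x i * g * (x i)⁻¹) * (x i * h * (x i)⁻¹)⁻¹ =
      x i * (h * g * h⁻¹) * (x i)⁻¹ by group, hh]
    group
  · intro hall
    -- g lies in some C i
    have hgmem : g ∈ ⋃ i, C i := by
      rw [← hunion]; exact ⟨1, by group⟩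
    obtain ⟨_, ⟨i, rfl⟩, hgi⟩ := hgmem
    obtain ⟨y, _, hCy⟩ := hclass i
    have hgi' : g ∈ C i := hgi
    rw [hCy] at hgi'
    have hxi' : x i * g * (x i)⁻¹ ∈ C i := hx i
    rw [hCy] at hxi'
    obtain ⟨a, haN, ha⟩ := hgi'
    obtain ⟨b, hbN, hb⟩ := hxi'
    -- g = (a*b⁻¹) * (x i * g * (x i)⁻¹) * (a*b⁻¹)⁻¹
    have key : g = (a * b⁻¹) * (x i * g * (x i)⁻¹) * (a * b⁻¹)⁻¹ := by
      rw [hb, ha]; group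
    obtain ⟨h, hN, hh⟩ := hall i
    refine ⟨a * b⁻¹ * h * (a * b⁻¹)⁻¹,
      N.mul_mem (N.mul_mem (N.mul_mem haN (N.inv_mem hbN)) hN)
        (N.inv_mem (N.mul_mem haN (N.inv_mem hbN))), ?_⟩
    conv_lhs => rw [key]
    rw [show a * b⁻¹ * h * (a * b⁻¹)⁻¹ * (a * b⁻¹ * (x i * g * (x i)⁻¹) * (a * b⁻¹)⁻¹) *
        (a * b⁻¹ * h * (a * b⁻¹)⁻¹)⁻¹ = a * b⁻¹ * (h * (x i * g * (x i)⁻¹) * h⁻¹) * (a * b⁻¹)⁻¹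
        by group, hh]
    conv_rhs => rw [key]
    group
end

section
/- Let G be a group and N a normal subgroup of finite odd index. If g ∈ N is real in G, then g is real in N. -/
/-- If `N` is a normal subgroup of finite odd index and `g ∈ N` is real in `G`,
then `g` is real in `N`. -/
theorem stmt_1 {G : Type*} [Group G] (N : Subgroup G) [N.Normal] (hodd : Odd N.index)
    (g : G) (hg : g ∈ N) (hreal : ∃ h : G, h * g * h⁻¹ = g⁻¹) :
    ∃ h ∈ N, h * g * h⁻¹ = g⁻¹ := by
  obtain ⟨h, hh⟩ := hreal
  have aux : ∀ n : ℕ, h ^ n * g * (h ^ n)⁻¹ = if Even n then g else g⁻¹ := by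
    intro n
    induction n with
    | zero => simp
    | succ k ih =>
      have : h ^ (k+1) * g * (h ^ (k+1))⁻¹ = h * (h ^ k * g * (h ^ k)⁻¹) * h⁻¹ := by
        rw [pow_succ']
        group
      rw [this, ih]
      by_cases hk : Even k
      · rw [if_pos hk, if_neg (by simpa [Nat.even_add_one] using hk)]
        exact hh
      · have h2 : h * g⁻¹ * h⁻¹ = g := by
          calc h * g⁻¹ * h⁻¹ = (h * g * h⁻¹)⁻¹ := by group
          _ = (g⁻¹)⁻¹ := by rw [hh]
          _ = g := inv_inv g
        rw [if_neg hk, if_pos (Nat.even_add_one.mpr hk)]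
        exact h2
  set m := orderOf ((h : G) : G ⧸ N) with hm
  have hfin : N.FiniteIndex := ⟨fun h0 => by simp [h0] at hodd⟩
  have hdvd : m ∣ N.index := by
    rw [N.index_eq_card]
    exact orderOf_dvd_natCard _
  have hmodd : Odd m := hodd.of_dvd_nat hdvd  -- maybe wrong name
  have hmem : h ^ m ∈ N := by
    rw [← QuotientGroup.eq_one_iff]
    exact_mod_cast pow_orderOf_eq_one ((h : G ⧸ N))
  refine ⟨h ^ m, hmem, ?_⟩
  rw [aux m, if_neg (Nat.not_even_iff_odd.mpr hmodd)]
end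

section
/- Let G be a group, N a normal subgroup, and g ∈ N an element with g² ≠ 1 that is real in G but not real in N. Then the index [R_G(g)·N : C_G(g)·N] equals 2, where R_G(g) = {h ∈ G : h g h⁻¹ = g or h g h⁻¹ = g⁻¹}. In particular, [G : C_G(g)·N] is even. -/
/-- If `g ∈ N` with `g² ≠ 1` is real in `G` but not in `N`, then
`[R_G(g)·N : C_G(g)·N] = 2`, so `[G : C_G(g)·N]` is even. -/
theorem stmt_2 {G : Type*} [Group G] (N : Subgroup G) [N.Normal] (g : G) (hg : g ∈ N)
    (hg2 : g * g ≠ 1)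
    (hrealG : ∃ h : G, h * g * h⁻¹ = g⁻¹)
    (hnotN : ¬ ∃ h ∈ N, h * g * h⁻¹ = g⁻¹)
    (R : Subgroup G) (hR : ∀ h : G, h ∈ R ↔ (h * g * h⁻¹ = g ∨ h * g * h⁻¹ = g⁻¹)) :
    (Subgroup.centralizer {g} ⊔ N).relIndex (R ⊔ N) = 2 ∧
      Even (Subgroup.centralizer {g} ⊔ N).index := by
  set C := Subgroup.centralizer {g} with hC
  -- decomposition of elements of `C ⊔ N`
  have hdecC : ∀ x ∈ C ⊔ N, ∃ c ∈ C, ∃ n ∈ N, c * n = x := by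
    intro x hx
    rw [← SetLike.mem_coe, Subgroup.mul_normal C N] at hx
    obtain ⟨c, hc, n, hn, rfl⟩ := hx
    exact ⟨c, hc, n, hn, rfl⟩
  have hdecR : ∀ x ∈ R ⊔ N, ∃ r ∈ R, ∃ n ∈ N, r * n = x := by
    intro x hx
    rw [← SetLike.mem_coe, Subgroup.mul_normal R N] at hx
    obtain ⟨r, hr, n, hn, rfl⟩ := hx
    exact ⟨r, hr, n, hn, rfl⟩
  -- key lemma: no element of `C ⊔ N` inverts `g`
  have keyL : ∀ y ∈ C ⊔ N, y * g * y⁻¹ ≠ g⁻¹ := by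
    intro y hy hyg
    obtain ⟨c, hc, n, hn, rfl⟩ := hdecC y hy
    rw [Subgroup.mem_centralizer_singleton_iff] at hc
    apply hnotN
    refine ⟨n, hn, ?_⟩
    have : c * (n * g * n⁻¹) * c⁻¹ = g⁻¹ := by
      rw [← hyg]; group
    have h2 : n * g * n⁻¹ = c⁻¹ * g⁻¹ * c := by
      rw [← this]; group
    rw [h2]
    have hcg : Commute c g := hc
    rw [mul_assoc, ← hcg.inv_right.eq, inv_mul_cancel_left]
  have hgne : g ≠ g⁻¹ := by
    intro h
    exact hg2 (by rw [← mul_inv_cancel g, ← h])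
  obtain ⟨h, hh⟩ := hrealG
  have hhR : h ∈ R := (hR h).mpr (Or.inr hh)
  have hCR : C ≤ R := by
    intro c hc
    rw [Subgroup.mem_centralizer_singleton_iff] at hc
    exact (hR c).mpr (Or.inl (by rw [hc, mul_inv_cancel_right]))
  have hle : C ⊔ N ≤ R ⊔ N := sup_le_sup_right hCR N
  have hrel : (C ⊔ N).relIndex (R ⊔ N) = 2 := by
    rw [Subgroup.relIndex, Subgroup.index_eq_two_iff]
    refine ⟨⟨h, Subgroup.mem_sup_left hhR⟩, ?_⟩
    rintro ⟨x, hx⟩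
    simp only [Subgroup.mem_subgroupOf, Subgroup.coe_mul]
    obtain ⟨r, hr, n, hn, rfl⟩ := hdecR x hx
    rcases (hR r).mp hr with hrg | hrg
    · -- r centralizes g, so x ∈ C ⊔ N and x*h ∉ C ⊔ N
      have hrC : r ∈ C := by
        rw [Subgroup.mem_centralizer_singleton_iff]
        have := hrg
        rw [mul_inv_eq_iff_eq_mul] at this
        rw [this]
      have hxCN : r * n ∈ C ⊔ N :=
        Subgroup.mul_mem _ (Subgroup.mem_sup_left hrC) (Subgroup.mem_sup_right hn)
      refine Or.inr ⟨hxCN, fun habs => ?_⟩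
      have : h ∈ C ⊔ N := by
        have := Subgroup.mul_mem _ (Subgroup.inv_mem _ hxCN) habs
        rwa [inv_mul_cancel_left] at this
      exact keyL h this hh
    · -- r inverts g : x*h ∈ C ⊔ N, x ∉ C ⊔ N
      have hrhC : r * h ∈ C := by
        rw [Subgroup.mem_centralizer_singleton_iff]
        have h1 : (r * h) * g * (r * h)⁻¹ = g := by
          have : r * (h * g * h⁻¹) * r⁻¹ = r * g⁻¹ * r⁻¹ := by rw [hh]
          have h2 : r * g⁻¹ * r⁻¹ = (r * g * r⁻¹)⁻¹ := by group
          rw [h2, hrg, inv_inv] at this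
          calc (r * h) * g * (r * h)⁻¹ = r * (h * g * h⁻¹) * r⁻¹ := by group
          _ = g := this
        rw [mul_inv_eq_iff_eq_mul] at h1
        rw [h1]
      have hxh : r * n * h ∈ C ⊔ N := by
        have heq : r * n * h = (r * h) * (h⁻¹ * n * h) := by group
        rw [heq]
        exact Subgroup.mul_mem _ (Subgroup.mem_sup_left hrhC)
          (Subgroup.mem_sup_right (Subgroup.Normal.conj_mem' ‹N.Normal› n hn h))
      refine Or.inl ⟨hxh, fun habs => ?_⟩
      have hrCN : r ∈ C ⊔ N := by
        have := Subgroup.mul_mem _ habs (Subgroup.inv_mem _ (Subgroup.mem_sup_right hn))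
        rwa [mul_inv_cancel_right] at this
      exact keyL r hrCN hrg
  refine ⟨hrel, ?_⟩
  rw [← Subgroup.relIndex_mul_index hle, hrel]
  exact even_two_mul _
end

section
/- Let q be an odd prime power and let g ∈ SU_n(q) (the group of determinant-1 elements of the finite unitary group GU_n(q) ⊆ GL_n(F_{q²})). Then g is real in SU_n(q) if and only if there exists h ∈ GU_n(q) with h g h⁻¹ = g⁻¹ such that det(h) has odd multiplicative order in F_{q²}^×. -/
/-- Reality criterion in `SU_n(q)` for odd prime power `q`: `g ∈ SU_n(q)` is real
in `SU_n(q)` iff some `h ∈ GU_n(q)` inverts `g` with `det h` of odd multiplicative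
order. -/
theorem stmt_3 (p k q n : ℕ) (hp : p.Prime) (hk : 0 < k) (hq : q = p ^ k)
    (hodd : Odd q) (F : Type*) [Field F] [Fintype F]
    (hcard : Fintype.card F = q ^ 2)
    (η : Matrix (Fin n) (Fin n) F)
    (hη : (η.map fun x => x ^ q).transpose = η) (hηdet : IsUnit η.det)
    (GU : Set (Matrix.GeneralLinearGroup (Fin n) F))
    (hGU : ∀ h : Matrix.GeneralLinearGroup (Fin n) F, h ∈ GU ↔
      ((↑h : Matrix (Fin n) (Fin n) F).map fun x => x ^ q).transpose * η *
        (↑h : Matrix (Fin n) (Fin n) F) = η)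
    (g : Matrix.GeneralLinearGroup (Fin n) F) (hgGU : g ∈ GU)
    (hgdet : Matrix.det (↑g : Matrix (Fin n) (Fin n) F) = 1) :
    (∃ h ∈ GU, Matrix.det (↑h : Matrix (Fin n) (Fin n) F) = 1 ∧ h * g * h⁻¹ = g⁻¹) ↔
      ∃ h ∈ GU, h * g * h⁻¹ = g⁻¹ ∧
        Odd (orderOf (Matrix.det (↑h : Matrix (Fin n) (Fin n) F))) := by
  constructor
  · rintro ⟨h, hmem, hdet, hconj⟩
    exact ⟨h, hmem, hconj, by rw [hdet, orderOf_one]; exact odd_one⟩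
  · rintro ⟨h, hmem, hconj, hord⟩
    -- characteristic of F is p
    have hq0 : q ≠ 0 := by
      rw [hq]; exact pow_ne_zero _ hp.pos.ne'
    haveI : Fact p.Prime := ⟨hp⟩
    have hcharF : CharP F p := by
      haveI : CharP F (ringChar F) := ringChar.charP F
      have hrp : (ringChar F).Prime := CharP.char_is_prime F (ringChar F)
      obtain ⟨m, hm⟩ := FiniteField.card F (ringChar F)
      have hdvd : ringChar F ∣ p ^ (2 * k) := by
        have : Fintype.card F = p ^ (2 * k) := by
          rw [hcard, hq, ← pow_mul, mul_comm]
        rw [this] at hm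
        exact hm.2 ▸ dvd_pow_self (ringChar F) m.pos.ne'
      have := (Nat.Prime.dvd_of_dvd_pow hrp hdvd)
      have : ringChar F = p := (Nat.prime_dvd_prime_iff_eq hrp hp).mp this
      rw [← this]; infer_instance
    haveI := hcharF
    -- Frobenius x ↦ x^q as a ring hom
    let σ : F →+* F :=
      { toFun := fun x => x ^ q
        map_one' := one_pow q
        map_mul' := fun x y => mul_pow x y q
        map_zero' := zero_pow hq0
        map_add' := fun x y => by rw [hq]; exact add_pow_char_pow x y p k }
    have hσ : (fun x : F => x ^ q) = ⇑σ := rfl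
    -- GU is closed under multiplication
    have hmul : ∀ A B : Matrix.GeneralLinearGroup (Fin n) F,
        A ∈ GU → B ∈ GU → A * B ∈ GU := by
      intro A B hA hB
      rw [hGU] at hA hB ⊢
      rw [Units.val_mul, hσ, Matrix.map_mul, Matrix.transpose_mul]
      rw [hσ] at hA hB
      calc ((↑B : Matrix (Fin n) (Fin n) F).map ⇑σ).transpose *
            ((↑A : Matrix (Fin n) (Fin n) F).map ⇑σ).transpose * η * (↑A * ↑B)
          = ((↑B : Matrix (Fin n) (Fin n) F).map ⇑σ).transpose *
            (((↑A : Matrix (Fin n) (Fin n) F).map ⇑σ).transpose * η * ↑A) * ↑B := by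
            simp only [mul_assoc]
        _ = ((↑B : Matrix (Fin n) (Fin n) F).map ⇑σ).transpose * η * ↑B := by rw [hA]
        _ = η := hB
    -- powers stay in GU
    have hpowmem : ∀ m : ℕ, h ^ (m + 1) ∈ GU := by
      intro m
      induction m with
      | zero => simpa using hmem
      | succ m ih =>
        have : h ^ (m + 1 + 1) = h ^ (m + 1) * h := by rw [pow_succ]
        rw [this]; exact hmul _ _ ih hmem
    -- odd powers of h still invert g
    have hoddconj : ∀ t : ℕ, h ^ (2 * t + 1) * g * (h ^ (2 * t + 1))⁻¹ = g⁻¹ := by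
      intro t
      induction t with
      | zero => simpa using hconj
      | succ t ih =>
        have hstep : h * g⁻¹ * h⁻¹ = g := by
          have h1 := congrArg (·⁻¹) hconj
          simpa [mul_inv_rev, mul_assoc] using h1
        have h2 : h ^ (2 * (t + 1) + 1) = h ^ 2 * h ^ (2 * t + 1) := by
          rw [← pow_add]; ring_nf
        rw [h2]
        calc h ^ 2 * h ^ (2 * t + 1) * g * (h ^ 2 * h ^ (2 * t + 1))⁻¹
            = h ^ 2 * (h ^ (2 * t + 1) * g * (h ^ (2 * t + 1))⁻¹) * (h ^ 2)⁻¹ := by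
              group
          _ = h ^ 2 * g⁻¹ * (h ^ 2)⁻¹ := by rw [ih]
          _ = h * (h * g⁻¹ * h⁻¹) * h⁻¹ := by
              rw [pow_two, mul_inv_rev]; simp [mul_assoc]
          _ = h * g * h⁻¹ := by rw [hstep]
          _ = g⁻¹ := hconj
    obtain ⟨t, ht⟩ := hord
    have hm : orderOf (Matrix.det (↑h : Matrix (Fin n) (Fin n) F)) = 2 * t + 1 := ht
    refine ⟨h ^ (2 * t + 1), ?_, ?_, hoddconj t⟩
    · simpa using hpowmem (2 * t)
    · have hc : (↑(h ^ (2 * t + 1)) : Matrix (Fin n) (Fin n) F)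
          = (↑h : Matrix (Fin n) (Fin n) F) ^ (2 * t + 1) := Units.val_pow_eq_pow_val h _
      rw [hc, Matrix.det_pow, ← hm, pow_orderOf_eq_one]
end

section
/- Let q ≡ 3 (mod 4) be a prime power and let β ∈ F_{q²}^× satisfy β^{q+1} = −1. Then the 2-part of the multiplicative order of β equals 2·(q+1)₂ = (q²−1)₂, where (m)₂ denotes the largest power of 2 dividing m. Consequently, for an even integer n = 2m, the element (−1)^m β^n has odd multiplicative order in F_{q²}^× if and only if (q+1)₂ divides m, i.e., if and only if (q²−1)₂ divides n. -/
/-- If `d ∣ 2n` but `d ∤ n`, then `ν₂(d) = ν₂(n) + 1`. -/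
lemma stmt_6_nu2 (d n : ℕ) (hd : d ≠ 0) (hn : n ≠ 0) (h1 : d ∣ 2 * n) (h2 : ¬ d ∣ n) :
    d.factorization 2 = n.factorization 2 + 1 := by
  have h2n : 2 * n ≠ 0 := by positivity
  have hle : d.factorization ≤ (2 * n).factorization :=
    (Nat.factorization_le_iff_dvd hd h2n).2 h1
  have hf2 : (2 * n).factorization = Nat.factorization 2 + n.factorization :=
    Nat.factorization_mul (by norm_num) hn
  have htwo : (Nat.factorization 2) = Finsupp.single 2 1 := Nat.Prime.factorization Nat.prime_two
  refine le_antisymm ?_ ?_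
  · have := hle 2
    rw [hf2] at this
    simp [htwo] at this
    omega
  · by_contra hlt
    push_neg at hlt
    apply h2
    rw [← Nat.factorization_le_iff_dvd hd hn]
    intro p
    rcases eq_or_ne p 2 with rfl | hp
    · omega
    · have := hle p
      rw [hf2] at this
      simpa [htwo, Finsupp.single_apply, Ne.symm hp] using this

/-- For `q ≡ 3 (mod 4)` a prime power, `F = F_{q²}`, and `β ∈ F^×` with
`β^{q+1} = −1`: the 2-part of the order of `β` is `2·(q+1)₂ = (q²−1)₂`, and
`(−1)^m β^{2m}` has odd order iff `(q+1)₂ ∣ m`, iff `(q²−1)₂ ∣ 2m`. -/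
theorem stmt_6 (p k q : ℕ) (hp : p.Prime) (hk : 0 < k) (hq : q = p ^ k)
    (h3 : q % 4 = 3) (F : Type*) [Field F] [Fintype F]
    (hcard : Fintype.card F = q ^ 2) (β : F) (hβ : β ^ (q + 1) = -1) :
    2 ^ ((orderOf β).factorization 2) = 2 * 2 ^ ((q + 1).factorization 2) ∧
    2 ^ ((orderOf β).factorization 2) = 2 ^ ((q ^ 2 - 1).factorization 2) ∧
    ∀ m : ℕ,
      (Odd (orderOf ((-1 : F) ^ m * β ^ (2 * m))) ↔
        2 ^ ((q + 1).factorization 2) ∣ m) ∧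
      (Odd (orderOf ((-1 : F) ^ m * β ^ (2 * m))) ↔
        2 ^ ((q ^ 2 - 1).factorization 2) ∣ 2 * m) := by
  have hq3 : 3 ≤ q := by omega
  -- the characteristic is odd, so `-1 ≠ 1`
  have hne11 : (-1 : F) ≠ 1 := by
    intro h
    have h2 : ((2 : ℕ) : F) = 0 := by push_cast; linear_combination -h
    have hdvd2 : ringChar F ∣ 2 := ringChar.dvd h2
    have hdvdq : ringChar F ∣ q ^ 2 := by
      have := FiniteField.cast_card_eq_zero F
      rw [hcard] at this
      exact ringChar.dvd (by exact_mod_cast this)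
    have hne1 : ringChar F ≠ 1 := CharP.ringChar_ne_one
    rcases (Nat.dvd_prime Nat.prime_two).1 hdvd2 with h1 | h2
    · exact hne1 h1
    · rw [h2, pow_two] at hdvdq
      have hodd : q % 2 = 1 := by omega
      rcases Nat.prime_two.dvd_mul.1 hdvdq with h' | h' <;> omega
  -- basic facts on the order of β
  have hpow : β ^ (2 * (q + 1)) = 1 := by
    rw [mul_comm, pow_mul, hβ]; norm_num
  have hfin : IsOfFinOrder β :=
    isOfFinOrder_iff_pow_eq_one.2 ⟨2 * (q + 1), by positivity, hpow⟩
  have hdpos : 0 < orderOf β := hfin.orderOf_pos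
  have hdvd : orderOf β ∣ 2 * (q + 1) := orderOf_dvd_of_pow_eq_one hpow
  have hndvd : ¬ orderOf β ∣ (q + 1) := by
    intro h
    have := orderOf_dvd_iff_pow_eq_one.1 h
    rw [hβ] at this
    exact hne11 this
  set a := (q + 1).factorization 2 with ha
  have key : (orderOf β).factorization 2 = a + 1 :=
    stmt_6_nu2 _ _ hdpos.ne' (by omega) hdvd hndvd
  -- ν₂(q-1) = 1
  have hqm1 : (q - 1).factorization 2 = 1 := by
    have hne : q - 1 ≠ 0 := by omega
    have h1 : (2 : ℕ) ^ 1 ∣ q - 1 := by simpa using (by omega : 2 ∣ q - 1)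
    have hle : 1 ≤ (q - 1).factorization 2 :=
      (Nat.Prime.pow_dvd_iff_le_factorization Nat.prime_two hne).1 h1
    have h4 : ¬ (2 : ℕ) ^ 2 ∣ q - 1 := by
      intro h
      have : (4 : ℕ) ∣ q - 1 := by simpa using h
      omega
    have hlt : ¬ 2 ≤ (q - 1).factorization 2 := fun h =>
      h4 ((Nat.Prime.pow_dvd_iff_le_factorization Nat.prime_two hne).2 h)
    omega
  -- ν₂(q²-1) = a + 1
  have hfac : q ^ 2 - 1 = (q - 1) * (q + 1) := by
    have := sq_tsub_sq q 1
    simpa [mul_comm] using this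
  have hq2 : (q ^ 2 - 1).factorization 2 = a + 1 := by
    rw [hfac, Nat.factorization_mul (by omega) (by omega), Finsupp.add_apply, hqm1, ha]
    omega
  refine ⟨by rw [key, pow_succ, mul_comm], by rw [key, hq2], ?_⟩
  -- the main equivalence
  have hmain : ∀ m : ℕ, Odd (orderOf ((-1 : F) ^ m * β ^ (2 * m))) ↔ 2 ^ a ∣ m := by
    intro m
    have hγ : (-1 : F) ^ m * β ^ (2 * m) = β ^ (m * (q + 3)) := by
      rw [← hβ, ← pow_mul, ← pow_add]
      congr 1
      ring
    rw [hγ]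
    rcases eq_or_ne m 0 with rfl | hm
    · simp
    · set N := m * (q + 3) with hN
      have hNne : N ≠ 0 := by positivity
      have horder : orderOf (β ^ N) = orderOf β / Nat.gcd (orderOf β) N :=
        hfin.orderOf_pow (n := N)
      set g := Nat.gcd (orderOf β) N with hg
      have hgdvd : g ∣ orderOf β := Nat.gcd_dvd_left _ _
      have hgpos : 0 < g := Nat.gcd_pos_of_pos_left _ hdpos
      have hqpos : 0 < orderOf β / g := Nat.div_pos (Nat.le_of_dvd hdpos hgdvd) hgpos
      have hmulfac : (orderOf β / g).factorization 2 + g.factorization 2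
          = (orderOf β).factorization 2 := by
        have h1 : ((orderOf β / g) * g).factorization 2
            = (orderOf β / g).factorization 2 + g.factorization 2 := by
          rw [Nat.factorization_mul hqpos.ne' hgpos.ne']; rfl
        rw [← h1, Nat.div_mul_cancel hgdvd]
      have hgfact : g.factorization 2
          = min ((orderOf β).factorization 2) (N.factorization 2) := by
        rw [hg, Nat.factorization_gcd hdpos.ne' hNne]; rfl
      have h2d : 2 ∣ orderOf β / g ↔ 1 ≤ (orderOf β / g).factorization 2 := by
        simpa using Nat.Prime.pow_dvd_iff_le_factorization (p := 2) (k := 1)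
          Nat.prime_two hqpos.ne'
      have hodd_iff : Odd (orderOf β / g) ↔ (orderOf β / g).factorization 2 = 0 := by
        rw [Nat.odd_iff]
        omega
      have hdvdN : 2 ^ (a + 1) ∣ N ↔ a + 1 ≤ N.factorization 2 :=
        Nat.Prime.pow_dvd_iff_le_factorization Nat.prime_two hNne
      have step1 : Odd (orderOf (β ^ N)) ↔ 2 ^ (a + 1) ∣ N := by
        rw [horder, hodd_iff, hdvdN]
        omega
      rw [step1]
      obtain ⟨c, hc⟩ : ∃ c, q + 3 = 2 * c := ⟨(q + 3) / 2, by omega⟩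
      have hcodd : Odd c := by rw [Nat.odd_iff]; omega
      have hcop : Nat.Coprime (2 ^ a) c :=
        Nat.Coprime.pow_left _ (Nat.coprime_two_left.2 hcodd)
      rw [hN, hc, show m * (2 * c) = 2 * (m * c) by ring, pow_succ, mul_comm (2 ^ a) 2,
        Nat.mul_dvd_mul_iff_left (by norm_num : 0 < 2)]
      exact ⟨fun h => hcop.dvd_of_dvd_mul_right h, fun h => h.mul_right c⟩
  intro m
  constructor
  · rw [hmain m, ha]
  · rw [hmain m, hq2]
    rw [pow_succ, mul_comm (2 ^ a) 2]
    exact (Nat.mul_dvd_mul_iff_left (by norm_num : 0 < 2)).symm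
end

section
/- Let q be an odd prime power, n = 2m even, and let GU_n(q) be defined with respect to the Hermitian form given by the antidiagonal matrix η_n (ones on the antidiagonal). Let u ∈ GU_n(q) be an upper unitriangular regular unipotent element (all superdiagonal entries nonzero). Then any h ∈ GU_n(q) with h u h⁻¹ = u⁻¹ is upper triangular with diagonal (β, −β, β, −β, ..., β, −β) for some β ∈ F_{q²}^× satisfying β^{q+1} = −1, and det(h) = (−1)^m β^n. -/
private lemma sum_one' {n : ℕ} {F : Type*} [AddCommMonoid F] (f : Fin n → F) (a : Fin n)
    (h : ∀ k, k ≠ a → f k = 0) : ∑ k, f k = f a :=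
  Finset.sum_eq_single_of_mem a (Finset.mem_univ a) (fun k _ hk => h k hk)

private lemma sum_two' {n : ℕ} {F : Type*} [AddCommMonoid F] (f : Fin n → F) (a b : Fin n)
    (hab : a ≠ b) (h : ∀ k, k ≠ a → k ≠ b → f k = 0) :
    ∑ k, f k = f a + f b := by
  have hs : ∑ k ∈ ({a, b} : Finset (Fin n)), f k = ∑ k, f k := by
    apply Finset.sum_subset (Finset.subset_univ _)
    intro k _ hk
    simp only [Finset.mem_insert, Finset.mem_singleton, not_or] at hk
    exact h k hk.1 hk.2
  rw [← hs, Finset.sum_pair hab]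

private lemma measure_lt' {n i l k : ℕ} (j : ℕ) (hl : i < l) (hln : l < n) (hk : k < n) :
    (n - 1 - l) * n + k < (n - 1 - i) * n + j := by
  have h1 : n - 1 - l + 1 ≤ n - 1 - i := by omega
  have h2 : (n - 1 - l + 1) * n ≤ (n - 1 - i) * n := Nat.mul_le_mul_right n h1
  have h3 : (n - 1 - l + 1) * n = (n - 1 - l) * n + n := by ring
  omega

private lemma beta_exists (q : ℕ) (hq3 : 3 ≤ q) (hodd : Odd q) (F : Type*) [Field F] [Fintype F]
    (hcard : Fintype.card F = q ^ 2) : ∃ β : F, β ^ (q + 1) = -1 := by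
  classical
  obtain ⟨g, hg⟩ := IsCyclic.exists_generator (α := Fˣ)
  have hog : orderOf g = q ^ 2 - 1 := by
    rw [orderOf_eq_card_of_forall_mem_zpowers hg, Nat.card_eq_fintype_card,
      Fintype.card_units, hcard]
  obtain ⟨k, hk⟩ := hodd
  have hkk : 1 ≤ k ^ 2 := Nat.one_le_pow 2 k (by omega)
  have hq2 : q ^ 2 = 2 * (2 * k ^ 2 + 2 * k) + 1 := by subst hk; ring
  set x : Fˣ := g ^ ((q ^ 2 - 1) / 2) with hxdef
  have hx2 : x ^ 2 = 1 := by
    rw [hxdef, ← pow_mul]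
    have h2 : (q ^ 2 - 1) / 2 * 2 = q ^ 2 - 1 := by omega
    rw [h2, ← hog, pow_orderOf_eq_one]
  have hx1 : x ≠ 1 := by
    intro hx
    have hgx : g ^ ((q ^ 2 - 1) / 2) = 1 := by rw [← hxdef]; exact hx
    have hd := orderOf_dvd_of_pow_eq_one hgx
    rw [hog] at hd
    have h0 : 0 < (q ^ 2 - 1) / 2 := by omega
    have := Nat.le_of_dvd h0 hd
    omega
  have hxF : (x : F) = -1 := by
    have h2 : (x : F) ^ 2 = 1 := by
      rw [← Units.val_pow_eq_pow_val, hx2, Units.val_one]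
    have hfac : ((x : F) - 1) * ((x : F) + 1) = 0 := by linear_combination h2
    rcases mul_eq_zero.mp hfac with hc | hc
    · exact absurd (Units.ext (by rw [Units.val_one]; exact sub_eq_zero.mp hc)) hx1
    · exact eq_neg_of_add_eq_zero_left hc
  refine ⟨((g ^ k : Fˣ) : F), ?_⟩
  have e1 : (q ^ 2 - 1) / 2 = 2 * k ^ 2 + 2 * k := by omega
  have e2 : k * (q + 1) = 2 * k ^ 2 + 2 * k := by subst hk; ring
  rw [← Units.val_pow_eq_pow_val, ← pow_mul, e2, ← e1, ← hxdef, hxF]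
/-- Reversing elements of a regular unipotent element of `GU_n(q)` (with respect
to the antidiagonal Hermitian form), `q` odd, `n = 2m`: any `h ∈ GU_n(q)` with
`h u h⁻¹ = u⁻¹` is upper triangular with diagonal `(β, −β, …, β, −β)` where
`β^{q+1} = −1`, and `det h = (−1)^m β^n`. -/
theorem stmt_9 (p e q m n : ℕ) (hp : p.Prime) (he : 0 < e) (hq : q = p ^ e)
    (hodd : Odd q) (hn : n = 2 * m)
    (F : Type*) [Field F] [Fintype F] (hcard : Fintype.card F = q ^ 2)
    (η : Matrix (Fin n) (Fin n) F)
    (hη : ∀ i j : Fin n, η i j = if (i : ℕ) + (j : ℕ) = n - 1 then 1 else 0)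
    (u h : Matrix.GeneralLinearGroup (Fin n) F)
    (huGU : ((↑u : Matrix (Fin n) (Fin n) F).map fun x => x ^ q).transpose * η *
      (↑u : Matrix (Fin n) (Fin n) F) = η)
    (hlow : ∀ i j : Fin n, (j : ℕ) < (i : ℕ) → (↑u : Matrix (Fin n) (Fin n) F) i j = 0)
    (hdiag : ∀ i : Fin n, (↑u : Matrix (Fin n) (Fin n) F) i i = 1)
    (hsup : ∀ i j : Fin n, (i : ℕ) + 1 = (j : ℕ) →
      (↑u : Matrix (Fin n) (Fin n) F) i j ≠ 0)
    (hhGU : ((↑h : Matrix (Fin n) (Fin n) F).map fun x => x ^ q).transpose * η *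
      (↑h : Matrix (Fin n) (Fin n) F) = η)
    (hrev : h * u * h⁻¹ = u⁻¹) :
    ∃ β : F, β ^ (q + 1) = -1 ∧
      (∀ i j : Fin n, (j : ℕ) < (i : ℕ) → (↑h : Matrix (Fin n) (Fin n) F) i j = 0) ∧
      (∀ i : Fin n, (↑h : Matrix (Fin n) (Fin n) F) i i = (-1 : F) ^ (i : ℕ) * β) ∧
      Matrix.det (↑h : Matrix (Fin n) (Fin n) F) = (-1 : F) ^ m * β ^ n := by
  have hq3 : 3 ≤ q := by
    have hp2 : 2 ≤ p := hp.two_le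
    have hpq : p ≤ q := by
      rw [hq]
      calc p = p ^ 1 := (pow_one p).symm
        _ ≤ p ^ e := Nat.pow_le_pow_right (by omega) he
    obtain ⟨k, hk⟩ := hodd
    omega
  rcases Nat.eq_zero_or_pos n with hn0 | hnpos
  · obtain ⟨β₀, hβ₀⟩ := beta_exists q hq3 hodd F hcard
    subst hn0
    exact ⟨β₀, hβ₀, fun i => i.elim0, fun i => i.elim0, by
      have hm : m = 0 := by omega
      simp [hm]⟩
  have hn2 : 2 ≤ n := by omega
  set A : Matrix (Fin n) (Fin n) F := (↑h : Matrix (Fin n) (Fin n) F) with hA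
  set U : Matrix (Fin n) (Fin n) F := (↑u : Matrix (Fin n) (Fin n) F) with hU
  have hE : U * A * U = A := by
    have h1 : u * h * u = h := by
      calc u * h * u = u * (h * u * h⁻¹) * h := by group
        _ = u * u⁻¹ * h := by rw [hrev]
        _ = h := by group
    have h2 := congrArg (Units.val) h1
    rw [Units.val_mul, Units.val_mul] at h2
    exact h2
  -- main induction : h is upper triangular
  have hupp' : ∀ d : ℕ, ∀ i j : Fin n,
      (n - 1 - (i:ℕ)) * n + (j:ℕ) = d → (j:ℕ) < (i:ℕ) → A i j = 0 := by
    intro d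
    induction d using Nat.strong_induction_on with
    | _ d IH =>
    intro i j hd hij
    have IH' : ∀ i' j' : Fin n, (n - 1 - (i':ℕ)) * n + (j':ℕ) < d →
        (j':ℕ) < (i':ℕ) → A i' j' = 0 :=
      fun i' j' h1 h2 => IH _ h1 i' j' rfl h2
    have hjn : (j:ℕ) + 1 < n := by have := i.isLt; omega
    set j1 : Fin n := ⟨(j:ℕ)+1, hjn⟩ with hj1
    have hj1v : (j1:ℕ) = (j:ℕ) + 1 := rfl
    have hne : j ≠ j1 := Fin.ne_of_val_ne (by omega)
    have hUA0 : ∀ k : Fin n, (k:ℕ) < (j:ℕ) → (U * A) i k = 0 := by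
      intro k hk
      rw [Matrix.mul_apply]
      apply Finset.sum_eq_zero
      intro l _
      rcases lt_trichotomy ((l:ℕ)) ((i:ℕ)) with hl | hl | hl
      · rw [hlow i l hl, zero_mul]
      · have hAlk : A l k = 0 := by
          refine IH' l k ?_ (by omega)
          rw [← hd]
          have ee : n - 1 - (l:ℕ) = n - 1 - (i:ℕ) := by omega
          rw [ee]
          omega
        rw [hAlk, mul_zero]
      · have hAlk : A l k = 0 := by
          refine IH' l k ?_ (by omega)
          rw [← hd]
          exact measure_lt' _ hl l.isLt k.isLt
        rw [hAlk, mul_zero]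
    have hUAc : ∀ k : Fin n, (k:ℕ) ≤ (i:ℕ) → (U * A) i k = A i k := by
      intro k hk
      have hs : ∀ l : Fin n, l ≠ i → U i l * A l k = 0 := by
        intro l hl
        have hlv : (l:ℕ) ≠ (i:ℕ) := fun hv => hl (Fin.ext hv)
        rcases lt_or_gt_of_ne hlv with hlt | hgt
        · rw [hlow i l hlt, zero_mul]
        · have hAlk : A l k = 0 := by
            refine IH' l k ?_ (by omega)
            rw [← hd]
            exact measure_lt' _ hgt l.isLt k.isLt
          rw [hAlk, mul_zero]
      rw [Matrix.mul_apply, show (∑ l, U i l * A l k) = U i i * A i k from sum_one' _ i hs,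
        hdiag i, one_mul]
    have e := congrFun (congrFun hE i) j1
    rw [Matrix.mul_apply] at e
    have hs2 : ∀ k : Fin n, k ≠ j → k ≠ j1 → (U * A) i k * U k j1 = 0 := by
      intro k hkj hkj1
      have hkv : (k:ℕ) ≠ (j:ℕ) := fun hv => hkj (Fin.ext hv)
      have hkv1 : (k:ℕ) ≠ (j1:ℕ) := fun hv => hkj1 (Fin.ext hv)
      rcases lt_trichotomy ((k:ℕ)) ((j:ℕ)) with hk | hk | hk
      · rw [hUA0 k hk, zero_mul]
      · exact absurd hk hkv
      · rw [hlow k j1 (by omega), mul_zero]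
    rw [show (∑ k, (U * A) i k * U k j1)
        = (U * A) i j * U j j1 + (U * A) i j1 * U j1 j1 from sum_two' _ j j1 hne hs2,
      hUAc j (by omega), hUAc j1 (by omega), hdiag j1, mul_one] at e
    have hz : A i j * U j j1 = 0 := by linear_combination e
    rcases mul_eq_zero.mp hz with h0 | h0
    · exact h0
    · exact absurd h0 (hsup j j1 (by omega))
  have hupp : ∀ i j : Fin n, (j:ℕ) < (i:ℕ) → A i j = 0 := fun i j => hupp' _ i j rfl
  -- diagonal alternation
  have hstep : ∀ (a : ℕ) (ha : a + 1 < n),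
      A ⟨a+1, ha⟩ ⟨a+1, ha⟩ = - A ⟨a, by omega⟩ ⟨a, by omega⟩ := by
    intro a ha
    set i : Fin n := ⟨a, by omega⟩ with hi
    set i1 : Fin n := ⟨a+1, ha⟩ with hi1
    have hiv : (i:ℕ) = a := rfl
    have hi1v : (i1:ℕ) = a + 1 := rfl
    have hne : i ≠ i1 := Fin.ne_of_val_ne (by omega)
    have hUAc : ∀ c : Fin n, (c:ℕ) ≤ a → (U * A) i c = A i c := by
      intro c hc
      have hs : ∀ l : Fin n, l ≠ i → U i l * A l c = 0 := by
        intro l hl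
        have hlv : (l:ℕ) ≠ (i:ℕ) := fun hv => hl (Fin.ext hv)
        rcases lt_or_gt_of_ne hlv with hlt | hgt
        · rw [hlow i l hlt, zero_mul]
        · rw [hupp l c (by omega), mul_zero]
      rw [Matrix.mul_apply, show (∑ l, U i l * A l c) = U i i * A i c from sum_one' _ i hs,
        hdiag i, one_mul]
    have hUAi1 : (U * A) i i1 = A i i1 + U i i1 * A i1 i1 := by
      have hs : ∀ l : Fin n, l ≠ i → l ≠ i1 → U i l * A l i1 = 0 := by
        intro l hl hl1
        have hlv : (l:ℕ) ≠ (i:ℕ) := fun hv => hl (Fin.ext hv)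
        have hlv1 : (l:ℕ) ≠ (i1:ℕ) := fun hv => hl1 (Fin.ext hv)
        rcases lt_trichotomy ((l:ℕ)) ((i:ℕ)) with hlt | heq | hgt
        · rw [hlow i l hlt, zero_mul]
        · exact absurd heq hlv
        · rw [hupp l i1 (by omega), mul_zero]
      rw [Matrix.mul_apply, show (∑ l, U i l * A l i1)
          = U i i * A i i1 + U i i1 * A i1 i1 from sum_two' _ i i1 hne hs, hdiag i, one_mul]
    have e := congrFun (congrFun hE i) i1
    rw [Matrix.mul_apply] at e
    have hs2 : ∀ k : Fin n, k ≠ i → k ≠ i1 → (U * A) i k * U k i1 = 0 := by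
      intro k hk hk1
      have hkv : (k:ℕ) ≠ (i:ℕ) := fun hv => hk (Fin.ext hv)
      have hkv1 : (k:ℕ) ≠ (i1:ℕ) := fun hv => hk1 (Fin.ext hv)
      rcases lt_trichotomy ((k:ℕ)) ((i:ℕ)) with hlt | heq | hgt
      · rw [hUAc k (by omega), hupp i k (by omega), zero_mul]
      · exact absurd heq hkv
      · rw [hlow k i1 (by omega), mul_zero]
    rw [show (∑ k, (U * A) i k * U k i1)
        = (U * A) i i * U i i1 + (U * A) i i1 * U i1 i1 from sum_two' _ i i1 hne hs2,
      hUAc i (by omega), hUAi1, hdiag i1, mul_one] at e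
    have hz : U i i1 * (A i i + A i1 i1) = 0 := by linear_combination e
    rcases mul_eq_zero.mp hz with h0 | h0
    · exact absurd h0 (hsup i i1 (by omega))
    · have hfin : A i1 i1 = - A i i := by linear_combination h0
      exact hfin
  have h0n : 0 < n := hnpos
  set i0 : Fin n := ⟨0, h0n⟩ with hi0
  have hi0v : (i0:ℕ) = 0 := rfl
  set β : F := A i0 i0 with hβ
  have hdiagA : ∀ (a : ℕ) (ha : a < n), A ⟨a, ha⟩ ⟨a, ha⟩ = (-1:F)^a * β := by
    intro a
    induction a with
    | zero =>
      intro ha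
      rw [pow_zero, one_mul]
    | succ a ih =>
      intro ha
      rw [hstep a ha, ih (by omega), pow_succ]
      ring
  have hdiagA' : ∀ i : Fin n, A i i = (-1:F)^(i:ℕ) * β := by
    intro i
    rcases i with ⟨a, ha⟩
    exact hdiagA a ha
  -- β ^ (q+1) = -1
  have hnn : n - 1 < n := by omega
  set iN : Fin n := ⟨n-1, hnn⟩ with hiN
  have hiNv : (iN:ℕ) = n - 1 := rfl
  have e := congrFun (congrFun hhGU iN) i0
  rw [Matrix.mul_apply] at e
  have hs3 : ∀ l : Fin n, l ≠ i0 →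
      ((A.map (fun x => x ^ q)).transpose * η) iN l * A l i0 = 0 := by
    intro l hl
    have hlv : (l:ℕ) ≠ (i0:ℕ) := fun hv => hl (Fin.ext hv)
    rw [hupp l i0 (by omega), mul_zero]
  rw [show (∑ l, ((A.map (fun x => x ^ q)).transpose * η) iN l * A l i0)
      = ((A.map (fun x => x ^ q)).transpose * η) iN i0 * A i0 i0 from sum_one' _ i0 hs3] at e
  rw [Matrix.mul_apply] at e
  have hs4 : ∀ k : Fin n, k ≠ iN →
      (A.map (fun x => x ^ q)).transpose iN k * η k i0 = 0 := by
    intro k hk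
    have hkv : (k:ℕ) ≠ (iN:ℕ) := fun hv => hk (Fin.ext hv)
    rw [hη k i0, if_neg (by omega), mul_zero]
  rw [show (∑ k, (A.map (fun x => x ^ q)).transpose iN k * η k i0)
      = (A.map (fun x => x ^ q)).transpose iN iN * η iN i0 from sum_one' _ iN hs4] at e
  rw [Matrix.transpose_apply, Matrix.map_apply, hη iN i0, if_pos (by omega)] at e
  rw [mul_one, hdiagA' iN, ← hβ] at e
  rw [show ((-1:F)^((iN:ℕ))) = -1 from by rw [hiNv]; exact Odd.neg_one_pow ⟨m-1, by omega⟩,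
    neg_one_mul, Odd.neg_pow hodd] at e
  have hβq : β ^ (q+1) = -1 := by
    rw [pow_succ]
    linear_combination -e
  refine ⟨β, hβq, hupp, hdiagA', ?_⟩
  have hBT : A.BlockTriangular id := fun i j hij => hupp i j hij
  rw [Matrix.det_of_upperTriangular hBT,
    show (∏ i, A i i) = ∏ i : Fin n, ((-1:F)^(i:ℕ) * β) from
      Finset.prod_congr rfl (fun i _ => hdiagA' i),
    Finset.prod_mul_distrib, Finset.prod_const, Finset.card_univ, Fintype.card_fin,
    Finset.prod_pow_eq_pow_sum]
  have hsum : (∑ i : Fin n, (i:ℕ)) = m * (n-1) := by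
    rw [Fin.sum_univ_eq_sum_range (fun i => i) n]
    have h2 := Finset.sum_range_id_mul_two n
    have h3 : n * (n-1) = (m * (n-1)) * 2 := by rw [hn]; ring
    omega
  rw [hsum, mul_comm m (n-1), pow_mul, show ((-1:F)^(n-1)) = -1 from
    Odd.neg_one_pow ⟨m-1, by omega⟩]
end

section
/- Let q be any prime power, n ≥ 1, and let u ∈ GL_n(F_q) be a unipotent upper unitriangular matrix with all superdiagonal entries nonzero (a regular unipotent element). Then any h ∈ GL_n(F_q) satisfying h u h⁻¹ = u⁻¹ is upper triangular, and its diagonal entries alternate in sign: they are of the form (β, −β, β, −β, ...) for some β ∈ F_q^×. -/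
open Finset in
private lemma aux_pow_zero {F : Type*} [Field F] {n : ℕ} {A : Matrix (Fin n) (Fin n) F}
    (hA : ∀ i j : Fin n, (j : ℕ) ≤ (i : ℕ) → A i j = 0) :
    ∀ (k : ℕ) (i j : Fin n), (j : ℕ) < (i : ℕ) + k → (A ^ k) i j = 0 := by
  intro k
  induction k with
  | zero =>
    intro i j hij
    rw [pow_zero]
    exact Matrix.one_apply_ne (by intro hh; subst hh; omega)
  | succ k ih =>
    intro i j hij
    rw [pow_succ, Matrix.mul_apply]
    apply Finset.sum_eq_zero
    intro l _
    by_cases hl : (l : ℕ) < (i : ℕ) + k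
    · rw [ih i l hl, zero_mul]
    · rw [hA l j (by omega), mul_zero]

open Finset in
private lemma aux_pow_ne_zero {F : Type*} [Field F] {n : ℕ} {A : Matrix (Fin n) (Fin n) F}
    (hA : ∀ i j : Fin n, (j : ℕ) ≤ (i : ℕ) → A i j = 0)
    (hsup : ∀ i j : Fin n, (i : ℕ) + 1 = (j : ℕ) → A i j ≠ 0) :
    ∀ (k : ℕ) (i j : Fin n), (i : ℕ) + k = (j : ℕ) → (A ^ k) i j ≠ 0 := by
  intro k
  induction k with
  | zero =>
    intro i j hij
    have : i = j := Fin.ext (by omega)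
    subst this
    rw [pow_zero, Matrix.one_apply_eq]
    exact one_ne_zero
  | succ k ih =>
    intro i j hij
    have hjn : (j : ℕ) < n := j.isLt
    set l0 : Fin n := ⟨(i : ℕ) + k, by omega⟩ with hl0
    rw [pow_succ, Matrix.mul_apply, Finset.sum_eq_single l0]
    · exact mul_ne_zero (ih i l0 rfl) (hsup l0 j (by simp [hl0]; omega))
    · intro l _ hl
      have hlv : (l : ℕ) ≠ (i : ℕ) + k := fun hh => hl (Fin.ext (by simpa [hl0] using hh))
      by_cases hc : (l : ℕ) < (i : ℕ) + k
      · rw [aux_pow_zero hA k i l hc, zero_mul]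
      · rw [hA l j (by omega), mul_zero]
    · intro hm; exact absurd (Finset.mem_univ l0) hm

/-- Any element inverting a regular unipotent upper unitriangular matrix is upper
triangular with alternating diagonal `(β, −β, β, −β, …)`. -/
theorem stmt_10 {F : Type*} [Field F] (n : ℕ)
    (u h : Matrix.GeneralLinearGroup (Fin n) F)
    (hlow : ∀ i j : Fin n, (j : ℕ) < (i : ℕ) → (↑u : Matrix (Fin n) (Fin n) F) i j = 0)
    (hdiag : ∀ i : Fin n, (↑u : Matrix (Fin n) (Fin n) F) i i = 1)
    (hsup : ∀ i j : Fin n, (i : ℕ) + 1 = (j : ℕ) →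
      (↑u : Matrix (Fin n) (Fin n) F) i j ≠ 0)
    (hrev : h * u * h⁻¹ = u⁻¹) :
    (∀ i j : Fin n, (j : ℕ) < (i : ℕ) → (↑h : Matrix (Fin n) (Fin n) F) i j = 0) ∧
    ∃ β : F, β ≠ 0 ∧
      ∀ i : Fin n, (↑h : Matrix (Fin n) (Fin n) F) i i = (-1 : F) ^ (i : ℕ) * β := by
  set U : Matrix (Fin n) (Fin n) F := ↑u with hUdef
  set V : Matrix (Fin n) (Fin n) F := ↑(u⁻¹) with hVdef
  set H : Matrix (Fin n) (Fin n) F := ↑h with hHdef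
  have hUV : U * V = 1 := u.mul_inv
  have hVU : V * U = 1 := u.inv_mul
  -- H * U = V * H
  have hHU : H * U = V * H := by
    have hu : h * u = u⁻¹ * h := mul_inv_eq_iff_eq_mul.mp hrev
    rw [hHdef, hUdef, hVdef, ← Units.val_mul, ← Units.val_mul, hu]
  -- V is upper triangular
  have hVinv : U⁻¹ = V := Matrix.inv_eq_right_inv hUV
  have hVlow : ∀ i j : Fin n, (j : ℕ) < (i : ℕ) → V i j = 0 := by
    haveI : Invertible U := invertibleOfRightInverse _ _ hUV
    have hBT : U.BlockTriangular (Fin.val) := fun i j hij => hlow i j hij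
    have := Matrix.blockTriangular_inv_of_blockTriangular hBT
    rw [hVinv] at this
    exact fun i j hij => this hij
  -- diagonal of V is 1
  have hVdiag : ∀ i : Fin n, V i i = 1 := by
    intro i
    have h1 : (U * V) i i = 1 := by rw [hUV, Matrix.one_apply_eq]
    rw [Matrix.mul_apply, Finset.sum_eq_single i] at h1
    · rw [hdiag i, one_mul] at h1; exact h1
    · intro l _ hl
      rcases lt_or_gt_of_ne (fun hv => hl (Fin.ext hv) : (l : ℕ) ≠ (i : ℕ)) with hc | hc
      · rw [hlow i l hc, zero_mul]
      · rw [hVlow l i hc, mul_zero]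
    · intro hm; exact absurd (Finset.mem_univ i) hm
  -- superdiagonal of V is -U
  have hVsup : ∀ i j : Fin n, (i : ℕ) + 1 = (j : ℕ) → V i j = - U i j := by
    intro i j hij
    have hne : i ≠ j := fun hh => by rw [hh] at hij; omega
    have h1 : (U * V) i j = 0 := by rw [hUV]; exact Matrix.one_apply_ne hne
    rw [Matrix.mul_apply, ← Finset.add_sum_erase _ _ (Finset.mem_univ i),
      Finset.sum_eq_single_of_mem j (Finset.mem_erase.mpr ⟨hne.symm, Finset.mem_univ j⟩)] at h1
    · rw [hdiag i, one_mul, hVdiag j, mul_one] at h1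
      linear_combination h1
    · intro l hl hlj
      have hli : l ≠ i := (Finset.mem_erase.mp hl).1
      have hlin : (l : ℕ) ≠ (i : ℕ) := fun hv => hli (Fin.ext hv)
      have hljn : (l : ℕ) ≠ (j : ℕ) := fun hv => hlj (Fin.ext hv)
      by_cases hc : (l : ℕ) < (i : ℕ)
      · rw [hlow i l hc, zero_mul]
      · rw [hVlow l j (by omega), mul_zero]
  -- N and M
  set N : Matrix (Fin n) (Fin n) F := U - 1 with hNdef
  set M : Matrix (Fin n) (Fin n) F := V - 1 with hMdef
  have hNstrict : ∀ i j : Fin n, (j : ℕ) ≤ (i : ℕ) → N i j = 0 := by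
    intro i j hij
    rcases eq_or_lt_of_le hij with hc | hc
    · have : j = i := Fin.ext hc
      subst this
      simp [hNdef, Matrix.sub_apply, hdiag j]
    · simp [hNdef, Matrix.sub_apply, hlow i j hc,
        Matrix.one_apply_ne (fun hh : i = j => by rw [hh] at hc; omega)]
  have hMstrict : ∀ i j : Fin n, (j : ℕ) ≤ (i : ℕ) → M i j = 0 := by
    intro i j hij
    rcases eq_or_lt_of_le hij with hc | hc
    · have : j = i := Fin.ext hc
      subst this
      simp [hMdef, Matrix.sub_apply, hVdiag j]
    · simp [hMdef, Matrix.sub_apply, hVlow i j hc,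
        Matrix.one_apply_ne (fun hh : i = j => by rw [hh] at hc; omega)]
  have hNsup : ∀ i j : Fin n, (i : ℕ) + 1 = (j : ℕ) → N i j = U i j := by
    intro i j hij
    simp [hNdef, Matrix.sub_apply, Matrix.one_apply_ne (fun hh : i = j => by rw [hh] at hij; omega)]
  have hMsup : ∀ i j : Fin n, (i : ℕ) + 1 = (j : ℕ) → M i j = - U i j := by
    intro i j hij
    simp [hMdef, Matrix.sub_apply, hVsup i j hij,
      Matrix.one_apply_ne (fun hh : i = j => by rw [hh] at hij; omega)]
  have hMsupne : ∀ i j : Fin n, (i : ℕ) + 1 = (j : ℕ) → M i j ≠ 0 := by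
    intro i j hij
    rw [hMsup i j hij]
    exact neg_ne_zero.mpr (hsup i j hij)
  have hHN : H * N = M * H := by
    rw [hNdef, hMdef, Matrix.mul_sub, Matrix.sub_mul, Matrix.mul_one, Matrix.one_mul, hHU]
  have hHNk : ∀ k : ℕ, H * N ^ k = M ^ k * H := by
    intro k
    induction k with
    | zero => simp
    | succ k ih =>
      rw [pow_succ, pow_succ, ← Matrix.mul_assoc, ih, Matrix.mul_assoc, hHN, ← Matrix.mul_assoc]
  -- lower triangularity of H
  have key : ∀ j : Fin n, ∀ s : ℕ, ∀ m : Fin n, n ≤ (m : ℕ) + s → (j : ℕ) < (m : ℕ) → H m j = 0 := by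
    intro j s
    induction s with
    | zero =>
      intro m hm _
      exact absurd hm (by have := m.isLt; omega)
    | succ s ih =>
      intro m hm hjm
      have hmn : (m : ℕ) < n := m.isLt
      set i : Fin n := ⟨(m : ℕ) - ((j : ℕ) + 1), by omega⟩ with hidef
      have hik : (i : ℕ) + ((j : ℕ) + 1) = (m : ℕ) := by simp [hidef]; omega
      have h0 : (M ^ ((j : ℕ) + 1) * H) i j = 0 := by
        rw [← hHNk, Matrix.mul_apply]
        apply Finset.sum_eq_zero
        intro l _
        rw [aux_pow_zero hNstrict ((j : ℕ) + 1) l j (by omega), mul_zero]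
      rw [Matrix.mul_apply, Finset.sum_eq_single m] at h0
      · exact (mul_eq_zero.mp h0).resolve_left (aux_pow_ne_zero hMstrict hMsupne _ i m hik)
      · intro l _ hlm
        have hlv : (l : ℕ) ≠ (m : ℕ) := fun hv => hlm (Fin.ext hv)
        by_cases hc : (l : ℕ) < (i : ℕ) + ((j : ℕ) + 1)
        · rw [aux_pow_zero hMstrict _ i l hc, zero_mul]
        · rw [ih l (by omega) (by omega), mul_zero]
      · intro hm'; exact absurd (Finset.mem_univ m) hm'
  have hlowH : ∀ i j : Fin n, (j : ℕ) < (i : ℕ) → H i j = 0 := by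
    intro i j hij
    exact key j n i (by omega) hij
  refine ⟨hlowH, ?_⟩
  -- alternating diagonal step
  have hstep : ∀ i j : Fin n, (i : ℕ) + 1 = (j : ℕ) → H j j = - H i i := by
    intro i j hij
    have h1 : (H * N) i j = H i i * N i j := by
      rw [Matrix.mul_apply, Finset.sum_eq_single i]
      · intro l _ hl
        have hlv : (l : ℕ) ≠ (i : ℕ) := fun hv => hl (Fin.ext hv)
        by_cases hc : (l : ℕ) < (i : ℕ)
        · rw [hlowH i l hc, zero_mul]
        · rw [hNstrict l j (by omega), mul_zero]
      · intro hm; exact absurd (Finset.mem_univ i) hm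
    have h2 : (M * H) i j = M i j * H j j := by
      rw [Matrix.mul_apply, Finset.sum_eq_single j]
      · intro l _ hl
        have hlv : (l : ℕ) ≠ (j : ℕ) := fun hv => hl (Fin.ext hv)
        by_cases hc : (l : ℕ) ≤ (i : ℕ)
        · rw [hMstrict i l hc, zero_mul]
        · rw [hlowH l j (by omega), mul_zero]
      · intro hm; exact absurd (Finset.mem_univ j) hm
    have heq : H i i * N i j = M i j * H j j := by
      rw [← h1, ← h2, hHN]
    rw [hNsup i j hij, hMsup i j hij] at heq
    have hune := hsup i j hij
    have : U i j * H j j = U i j * (- H i i) := by linear_combination heq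
    exact mul_left_cancel₀ hune this
  -- diagonal is nonzero: determinant argument
  rcases Nat.eq_zero_or_pos n with hn | hn
  · subst hn
    exact ⟨1, one_ne_zero, fun i => i.elim0⟩
  · set i0 : Fin n := ⟨0, hn⟩ with hi0
    set β : F := H i0 i0 with hβ
    have hBT : H.BlockTriangular id := by
      intro i j hij
      exact hlowH i j hij
    have hdet : H.det = ∏ i, H i i := Matrix.det_of_upperTriangular hBT
    have hdetne : H.det ≠ 0 := by
      have : IsUnit H.det := (Matrix.isUnit_iff_isUnit_det H).mp h.isUnit
      exact this.ne_zero
    have hβne : β ≠ 0 := by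
      intro hb
      apply hdetne
      rw [hdet]
      exact Finset.prod_eq_zero (Finset.mem_univ i0) hb
    refine ⟨β, hβne, ?_⟩
    have hk : ∀ k : ℕ, ∀ hkn : k < n, H ⟨k, hkn⟩ ⟨k, hkn⟩ = (-1 : F) ^ k * β := by
      intro k
      induction k with
      | zero => intro hkn; simp [hβ, hi0]
      | succ k ih =>
        intro hkn
        have hk' : k < n := Nat.lt_of_succ_lt hkn
        have := hstep ⟨k, hk'⟩ ⟨k + 1, hkn⟩ rfl
        rw [this, ih hk', pow_succ]
        ring
    intro i
    have := hk i.1 i.2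
    simpa using this
end
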